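/- arXiv:2312.16370 — 2 statements merged into one kernel-verified Lean document; each statement's English description precedes it below -/
import Mathlib

section
/- Let n > 30, ε ≤ 1, and δ ≤ 0.1. Consider graphs on the vertex set {s, t, v₁, …, v_n} where for each τ ∈ {0,1}ⁿ the graph G_τ has, for every i, a unit-weight edge between s and v_i if τ_i = 1 and a unit-weight edge between t and v_i if τ_i = 0 (and no other edges); note the minimum s-t cut weight of every G_τ is 0. Then for every randomized mechanism M mapping weighted graphs on this vertex set to s-t cuts that is (ε, δ)-differentially private with respect to edge-neighboring graphs, there exists τ ∈ {0,1}ⁿ such that the expected weight in G_τ of the cut M(G_τ) is at least n/20. -/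
open Finset

/-- `w(E(S,T))`: for disjoint vertex sets `S, T` this is the total weight of edges
between `S` and `T` (each unordered pair counted once). -/
def cutWeight {V : Type} [Fintype V] [DecidableEq V] (w : V → V → ℝ)
    (S T : Finset V) : ℝ :=
  ∑ u ∈ S, ∑ v ∈ T, w u v

/-- A valid weight function of a weighted graph: nonnegative, symmetric and zero
on the diagonal. -/
def IsWeight {V : Type} (w : V → V → ℝ) : Prop :=
  (∀ u v, 0 ≤ w u v) ∧ (∀ u v, w u v = w v u) ∧ (∀ u, w u u = 0)

/-- Two weight functions on the same vertex set are (edge-)neighboring if they agree on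
all but one unordered pair of vertices, where they differ by at most `1`. -/
def Neighboring {V : Type} (w w' : V → V → ℝ) : Prop :=
  ∃ a b : V, |w a b - w' a b| ≤ 1 ∧
    ∀ u v, ¬((u = a ∧ v = b) ∨ (u = b ∧ v = a)) → w u v = w' u v

/-- The terminal `s` (for `b = true`, i.e. `τ_i = 1`) or `t` (for `b = false`) in the
vertex set `{s, t, v₁, …, v_n}` realized as `Fin (n + 2)` with `s = 0`, `t = 1`. -/
def termOf (n : ℕ) (b : Bool) : Fin (n + 2) :=
  if b then ⟨0, by omega⟩ else ⟨1, by omega⟩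

/-- The non-terminal vertex `v_i` in the vertex set `{s, t, v₁, …, v_n}` realized as
`Fin (n + 2)`. -/
def vtx (n : ℕ) (i : Fin n) : Fin (n + 2) := ⟨(i : ℕ) + 2, by omega⟩

/-- The weight function of the graph `G_τ`: for each `i`, a unit-weight edge between
`s` and `v_i` if `τ_i = 1`, and a unit-weight edge between `t` and `v_i` if `τ_i = 0`;
no other edges. -/
def gTau (n : ℕ) (τ : Fin n → Bool) (u v : Fin (n + 2)) : ℝ :=
  if ∃ i : Fin n, (u = termOf n (τ i) ∧ v = vtx n i) ∨ (v = termOf n (τ i) ∧ u = vtx n i)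
    then 1 else 0


section Aux
variable {n : ℕ}

lemma termOf_ne_vtx (b : Bool) (i : Fin n) : termOf n b ≠ vtx n i := by
  intro h
  have h2 := congrArg Fin.val h
  cases b <;> simp only [termOf, vtx, if_true, Bool.false_eq_true, if_false] at h2 <;> omega

lemma vtx_injective (i j : Fin n) (h : vtx n i = vtx n j) : i = j := by
  have h2 := congrArg Fin.val h
  simp only [vtx] at h2
  exact Fin.ext (by omega)

lemma isWeight_gTau (τ : Fin n → Bool) : IsWeight (gTau n τ) := by
  refine ⟨fun u v => ?_, fun u v => ?_, fun u => ?_⟩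
  · unfold gTau; split <;> norm_num
  · unfold gTau
    congr 1
    simp only [eq_iff_iff]
    constructor <;> rintro ⟨i, h⟩ <;> exact ⟨i, h.symm⟩
  · unfold gTau
    rw [if_neg]
    rintro ⟨i, ⟨h1, h2⟩ | ⟨h1, h2⟩⟩ <;> exact termOf_ne_vtx _ _ (h1.symm.trans h2)

def wMid (n : ℕ) (τ : Fin n → Bool) (i : Fin n) (u v : Fin (n + 2)) : ℝ :=
  if u = vtx n i ∨ v = vtx n i then 0 else gTau n τ u v

lemma isWeight_wMid (τ : Fin n → Bool) (i : Fin n) : IsWeight (wMid n τ i) := by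
  obtain ⟨h0, hs, hd⟩ := isWeight_gTau (n := n) τ
  refine ⟨fun u v => ?_, fun u v => ?_, fun u => ?_⟩
  · unfold wMid; split
    · exact le_refl 0
    · exact h0 u v
  · unfold wMid
    by_cases h : u = vtx n i ∨ v = vtx n i
    · rw [if_pos h, if_pos h.symm]
    · rw [if_neg h, if_neg (fun hh => h hh.symm)]; exact hs u v
  · unfold wMid; split
    · rfl
    · exact hd u

/-- gTau vanishes on pairs touching `vtx i` other than the designated edge. -/
lemma gTau_eq_zero_of_touch (τ : Fin n → Bool) (i : Fin n) (u v : Fin (n + 2))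
    (htouch : u = vtx n i ∨ v = vtx n i)
    (hne : ¬((u = termOf n (τ i) ∧ v = vtx n i) ∨ (v = termOf n (τ i) ∧ u = vtx n i))) :
    gTau n τ u v = 0 := by
  unfold gTau
  rw [if_neg]
  rintro ⟨j, ⟨h1, h2⟩ | ⟨h1, h2⟩⟩
  · rcases htouch with h3 | h3
    · exact termOf_ne_vtx _ _ (h1.symm.trans h3)
    · have : j = i := vtx_injective _ _ (h2.symm.trans h3)
      subst this
      exact hne (Or.inl ⟨h1, h2⟩)
  · rcases htouch with h3 | h3
    · have : j = i := vtx_injective _ _ (h2.symm.trans h3)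
      subst this
      exact hne (Or.inr ⟨h1, h2⟩)
    · exact termOf_ne_vtx _ _ (h1.symm.trans h3)

lemma gTau_edge (τ : Fin n → Bool) (i : Fin n) :
    gTau n τ (termOf n (τ i)) (vtx n i) = 1 := by
  unfold gTau
  rw [if_pos ⟨i, Or.inl ⟨rfl, rfl⟩⟩]

lemma neighboring_gTau_wMid (τ : Fin n → Bool) (i : Fin n) :
    Neighboring (gTau n τ) (wMid n τ i) := by
  refine ⟨termOf n (τ i), vtx n i, ?_, fun u v hne => ?_⟩
  · rw [gTau_edge]
    unfold wMid
    rw [if_pos (Or.inr rfl)]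
    norm_num
  · unfold wMid
    by_cases h : u = vtx n i ∨ v = vtx n i
    · rw [if_pos h]
      refine gTau_eq_zero_of_touch τ i u v h ?_
      rintro (⟨h1, h2⟩ | ⟨h1, h2⟩)
      · exact hne (Or.inl ⟨h1, h2⟩)
      · exact hne (Or.inr ⟨h2, h1⟩)
    · rw [if_neg h]

lemma neighboring_symm {V : Type} {w w' : V → V → ℝ} (h : Neighboring w w') :
    Neighboring w' w := by
  obtain ⟨a, b, h1, h2⟩ := h
  exact ⟨a, b, by rwa [abs_sub_comm], fun u v hh => (h2 u v hh).symm⟩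

/-- gTau doesn't depend on the bit at i, off pairs touching vtx i. -/
lemma wMid_flip (τ : Fin n → Bool) (i : Fin n) :
    wMid n τ i = wMid n (Function.update τ i (!(τ i))) i := by
  funext u v
  unfold wMid
  by_cases h : u = vtx n i ∨ v = vtx n i
  · rw [if_pos h, if_pos h]
  · rw [if_neg h, if_neg h]
    push_neg at h
    unfold gTau
    congr 1
    simp only [eq_iff_iff]
    constructor <;> rintro ⟨j, hj⟩ <;> refine ⟨j, ?_⟩ <;>
    · have hji : j ≠ i := by
        rintro rfl
        rcases hj with ⟨_, h2⟩ | ⟨_, h2⟩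
        · exact h.2 h2
        · exact h.1 h2
      simpa [Function.update_of_ne hji] using hj

end Aux

section Prob
variable {α : Type} [Fintype α]

open scoped Classical in
noncomputable def Pr (p : PMF α) (A : Set α) : ℝ := (p.toOuterMeasure A).toReal

omit [Fintype α] in
lemma toOuterMeasure_ne_top (p : PMF α) (A : Set α) : p.toOuterMeasure A ≠ ⊤ := by
  refine ne_top_of_le_ne_top ENNReal.one_ne_top ?_
  rw [PMF.toOuterMeasure_apply, ← PMF.tsum_coe p]
  exact Summable.tsum_le_tsum (fun a => Set.indicator_apply_le fun _ => le_rfl)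
    ENNReal.summable ENNReal.summable

open scoped Classical in
lemma Pr_eq_sum (p : PMF α) (A : Set α) :
    Pr p A = ∑ a, if a ∈ A then (p a).toReal else 0 := by
  unfold Pr
  rw [PMF.toOuterMeasure_apply, tsum_fintype, ENNReal.toReal_sum (fun a _ => ?_)]
  · refine Finset.sum_congr rfl fun a _ => ?_
    rw [Set.indicator_apply]
    split <;> simp
  · exact ne_top_of_le_ne_top (PMF.apply_ne_top p a) (Set.indicator_apply_le' (fun _ => le_refl _) (fun _ => zero_le))

lemma sum_toReal (p : PMF α) : ∑ a, (p a).toReal = 1 := by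
  rw [← ENNReal.toReal_sum (fun a _ => PMF.apply_ne_top p a), ← tsum_fintype (L := .unconditional _), PMF.tsum_coe,
    ENNReal.toReal_one]

omit [Fintype α] in
lemma Pr_nonneg (p : PMF α) (A : Set α) : 0 ≤ Pr p A := ENNReal.toReal_nonneg

open scoped Classical in
lemma Pr_compl (p : PMF α) (A : Set α) : Pr p Aᶜ = 1 - Pr p A := by
  rw [Pr_eq_sum, Pr_eq_sum, eq_sub_iff_add_eq, ← Finset.sum_add_distrib, ← sum_toReal p]
  refine Finset.sum_congr rfl fun a _ => ?_
  by_cases h : a ∈ A <;> simp [h]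

omit [Fintype α] in
lemma dp_real {p p' : PMF α} {ε δ : ℝ}
    (h : ∀ O : Set α, p.toOuterMeasure O ≤
        ENNReal.ofReal (Real.exp ε) * p'.toOuterMeasure O + ENNReal.ofReal δ)
    (A : Set α) : Pr p A ≤ Real.exp ε * Pr p' A + max δ 0 := by
  have h2 := h A
  have hfin : ENNReal.ofReal (Real.exp ε) * p'.toOuterMeasure A + ENNReal.ofReal δ ≠ ⊤ :=
    ENNReal.add_ne_top.2 ⟨ENNReal.mul_ne_top ENNReal.ofReal_ne_top (toOuterMeasure_ne_top p' A),
      ENNReal.ofReal_ne_top⟩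
  have h3 := ENNReal.toReal_mono hfin h2
  rwa [ENNReal.toReal_add (ENNReal.mul_ne_top ENNReal.ofReal_ne_top (toOuterMeasure_ne_top p' A))
    ENNReal.ofReal_ne_top, ENNReal.toReal_mul, ENNReal.toReal_ofReal (Real.exp_nonneg ε),
    ENNReal.toReal_ofReal'] at h3

end Prob

section Cut
variable {n : ℕ}

lemma edge_unique (τ : Fin n → Bool) {i j : Fin n} {u v : Fin (n + 2)}
    (hi : (u = termOf n (τ i) ∧ v = vtx n i) ∨ (v = termOf n (τ i) ∧ u = vtx n i))
    (hj : (u = termOf n (τ j) ∧ v = vtx n j) ∨ (v = termOf n (τ j) ∧ u = vtx n j)) :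
    i = j := by
  rcases hi with ⟨hi1, hi2⟩ | ⟨hi1, hi2⟩ <;> rcases hj with ⟨hj1, hj2⟩ | ⟨hj1, hj2⟩
  · exact vtx_injective _ _ (hi2.symm.trans hj2)
  · exact absurd (hj1.symm.trans hi2) (termOf_ne_vtx _ _)
  · exact absurd (hi1.symm.trans hj2) (termOf_ne_vtx _ _)
  · exact vtx_injective _ _ (hi2.symm.trans hj2)

lemma gTau_eq_sum (τ : Fin n → Bool) (u v : Fin (n + 2)) :
    gTau n τ u v = ∑ i : Fin n,
      (if (u = termOf n (τ i) ∧ v = vtx n i) ∨ (v = termOf n (τ i) ∧ u = vtx n i)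
        then (1 : ℝ) else 0) := by
  unfold gTau
  by_cases h : ∃ i : Fin n,
      (u = termOf n (τ i) ∧ v = vtx n i) ∨ (v = termOf n (τ i) ∧ u = vtx n i)
  · obtain ⟨i0, hi0⟩ := h
    rw [if_pos ⟨i0, hi0⟩, Finset.sum_eq_single i0]
    · rw [if_pos hi0]
    · intro j _ hj
      rw [if_neg]
      intro hjj
      exact hj (edge_unique τ hjj hi0)
    · intro h'; exact absurd (Finset.mem_univ i0) h'
  · rw [if_neg h]
    push_neg at h
    refine (Finset.sum_eq_zero fun i _ => ?_).symm
    rw [if_neg]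
    intro hh
    rcases hh with hh | hh
    · exact (h i).1 hh.1 hh.2
    · exact (h i).2 hh.1 hh.2

lemma sum_single_pair {V : Type} [Fintype V] [DecidableEq V] (S T : Finset V) (a b : V) :
    ∑ u ∈ S, ∑ v ∈ T, (if u = a ∧ v = b then (1:ℝ) else 0)
      = if a ∈ S ∧ b ∈ T then 1 else 0 := by
  have hinner : ∀ u : V, (∑ v ∈ T, if u = a ∧ v = b then (1:ℝ) else 0)
      = if u = a then (if b ∈ T then (1:ℝ) else 0) else 0 := by
    intro u
    by_cases h : u = a
    · subst h
      simp [Finset.sum_ite_eq' T b]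
    · simp [h]
  rw [Finset.sum_congr rfl fun u _ => hinner u, Finset.sum_ite_eq' S a]
  by_cases ha : a ∈ S <;> by_cases hb : b ∈ T <;> simp [ha, hb]

lemma cut_inner (τ : Fin n → Bool) (i : Fin n) (S : Finset (Fin (n + 2)))
    (hs : termOf n true ∈ S) (ht : termOf n false ∉ S) :
    ∑ u ∈ S, ∑ v ∈ Sᶜ,
      (if (u = termOf n (τ i) ∧ v = vtx n i) ∨ (v = termOf n (τ i) ∧ u = vtx n i)
        then (1 : ℝ) else 0)
    = if vtx n i ∈ S ↔ τ i = false then 1 else 0 := by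
  have hab : ∀ u v : Fin (n + 2),
      (if (u = termOf n (τ i) ∧ v = vtx n i) ∨ (v = termOf n (τ i) ∧ u = vtx n i)
        then (1 : ℝ) else 0)
      = (if u = termOf n (τ i) ∧ v = vtx n i then 1 else 0)
        + (if u = vtx n i ∧ v = termOf n (τ i) then 1 else 0) := by
    intro u v
    by_cases h1 : u = termOf n (τ i) ∧ v = vtx n i <;>
      by_cases h2 : u = vtx n i ∧ v = termOf n (τ i)
    · exact absurd (h1.1.symm.trans h2.1) (termOf_ne_vtx _ _)
    · rw [if_pos (Or.inl h1), if_pos h1, if_neg h2]; norm_num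
    · rw [if_pos (Or.inr ⟨h2.2, h2.1⟩), if_neg h1, if_pos h2]; norm_num
    · have hor : ¬((u = termOf n (τ i) ∧ v = vtx n i) ∨ (v = termOf n (τ i) ∧ u = vtx n i)) := by
        rintro (h | h)
        · exact h1 h
        · exact h2 ⟨h.2, h.1⟩
      rw [if_neg hor, if_neg h1, if_neg h2]; norm_num
  simp only [hab, Finset.sum_add_distrib, sum_single_pair]
  simp only [Finset.mem_compl]
  cases htau : τ i
  · simp [hs, ht]
  · simp [hs, ht]

lemma cutWeight_gTau (τ : Fin n → Bool) (S : Finset (Fin (n + 2)))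
    (hs : termOf n true ∈ S) (ht : termOf n false ∉ S) :
    cutWeight (gTau n τ) S Sᶜ
      = ∑ i : Fin n, (if vtx n i ∈ S ↔ τ i = false then (1:ℝ) else 0) := by
  unfold cutWeight
  simp only [gTau_eq_sum τ]
  rw [Finset.sum_congr rfl fun u (_ : u ∈ S) => Finset.sum_comm (s := Sᶜ) (t := Finset.univ),
    Finset.sum_comm]
  exact Finset.sum_congr rfl fun i _ => cut_inner τ i S hs ht

end Cut

def wrongEvent (n : ℕ) (τ : Fin n → Bool) (i : Fin n) : Set (Finset (Fin (n + 2))) :=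
  {S | vtx n i ∈ S ↔ τ i = false}

def flipB {n : ℕ} (τ : Fin n → Bool) (i : Fin n) : Fin n → Bool :=
  Function.update τ i (!(τ i))

lemma flipB_flipB {n : ℕ} (τ : Fin n → Bool) (i : Fin n) : flipB (flipB τ i) i = τ := by
  funext j
  by_cases h : j = i
  · subst h; simp [flipB]
  · simp [flipB, Function.update_of_ne h]

lemma wrongEvent_compl {n : ℕ} (τ : Fin n → Bool) (i : Fin n) :
    (wrongEvent n τ i)ᶜ = wrongEvent n (flipB τ i) i := by
  ext S
  simp only [Set.mem_compl_iff, wrongEvent, Set.mem_setOf_eq, flipB, Function.update_self]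
  cases τ i <;> simp

lemma wMid_flip' {n : ℕ} (τ : Fin n → Bool) (i : Fin n) :
    wMid n τ i = wMid n (flipB τ i) i := wMid_flip τ i


/-- For `n > 30`, `ε ≤ 1`, `δ ≤ 0.1`, every `(ε, δ)`-differentially private
mechanism mapping weighted graphs on the vertex set `{s, t, v₁, …, v_n}` to `s`-`t` cuts
has, on some input `G_τ` (whose minimum `s`-`t` cut weight is `0`), expected output cut
weight at least `n/20`. -/
theorem dp_min_st_cut_lower_bound (n : ℕ) (hn : 30 < n) (ε δ : ℝ)
    (hε : ε ≤ 1) (hδ : δ ≤ 0.1)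
    (M : (Fin (n + 2) → Fin (n + 2) → ℝ) → PMF (Finset (Fin (n + 2))))
    -- M outputs s-t cuts
    (hout : ∀ w, IsWeight w →
      ∀ S ∈ (M w).support, termOf n true ∈ S ∧ termOf n false ∉ S)
    -- M is (ε, δ)-differentially private
    (hdp : ∀ w w', IsWeight w → IsWeight w' → Neighboring w w' →
      ∀ O : Set (Finset (Fin (n + 2))),
        (M w).toOuterMeasure O ≤
          ENNReal.ofReal (Real.exp ε) * (M w').toOuterMeasure O + ENNReal.ofReal δ) :
    ∃ τ : Fin n → Bool,
      (n : ℝ) / 20 ≤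
        ∑ S : Finset (Fin (n + 2)),
          ((M (gTau n τ)) S).toReal * cutWeight (gTau n τ) S Sᶜ := by
  classical
  set d : ℝ := max δ 0 with hd_def
  have hd0 : 0 ≤ d := le_max_right δ 0
  have hd1 : d ≤ 0.1 := max_le hδ (by norm_num)
  set x : ℝ := Real.exp ε with hx_def
  have hx0 : 0 < x := Real.exp_pos ε
  have hx1 : x ≤ 2.7182818286 := le_of_lt (lt_of_le_of_lt (Real.exp_le_exp.2 hε) Real.exp_one_lt_d9)
  -- abbreviation for the wrong-probability
  set a : (Fin n → Bool) → Fin n → ℝ :=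
    fun τ i => Pr (M (gTau n τ)) (wrongEvent n τ i) with ha_def
  -- DP chain through the middle graph
  have step : ∀ (τ : Fin n → Bool) (i : Fin n) (A : Set (Finset (Fin (n + 2)))),
      Pr (M (gTau n τ)) A ≤ x * (x * Pr (M (gTau n (flipB τ i))) A + d) + d := by
    intro τ i A
    have n1 := neighboring_gTau_wMid τ i
    have n2 : Neighboring (wMid n τ i) (gTau n (flipB τ i)) := by
      rw [wMid_flip' τ i]
      exact neighboring_symm (neighboring_gTau_wMid _ i)
    have d1 := dp_real (hdp _ _ (isWeight_gTau τ) (isWeight_wMid τ i) n1) A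
    have d2 := dp_real (hdp _ _ (isWeight_wMid τ i) (isWeight_gTau _) n2) A
    refine d1.trans ?_
    have := mul_le_mul_of_nonneg_left d2 hx0.le
    linarith
  have key : ∀ (τ : Fin n → Bool) (i : Fin n),
      1 - a τ i ≤ x * (x * a (flipB τ i) i + d) + d := by
    intro τ i
    have h := step τ i (wrongEvent n (flipB τ i) i)
    have hA : Pr (M (gTau n τ)) (wrongEvent n (flipB τ i) i)
        = 1 - Pr (M (gTau n τ)) (wrongEvent n τ i) := by
      rw [← wrongEvent_compl, Pr_compl]
    rw [hA] at h
    simpa [ha_def] using h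
  have pairBound : ∀ (τ : Fin n → Bool) (i : Fin n),
      1 / 10 ≤ a τ i + a (flipB τ i) i := by
    intro τ i
    have k1 := key τ i
    have k2 := key (flipB τ i) i
    rw [flipB_flipB] at k2
    have haa : 0 ≤ a τ i := Pr_nonneg _ _
    have hbb : 0 ≤ a (flipB τ i) i := Pr_nonneg _ _
    nlinarith [mul_nonneg (mul_nonneg hx0.le hx0.le) (add_nonneg haa hbb),
      mul_le_mul_of_nonneg_left hd1 (by positivity : (0:ℝ) ≤ x + 1),
      sq_nonneg x, mul_le_mul hx1 hx1 hx0.le (by norm_num)]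
  -- sum over τ of a τ i is at least card/20 for each i
  have hflip_bij : ∀ i : Fin n, Function.Bijective (fun τ : Fin n → Bool => flipB τ i) := by
    intro i
    exact Function.Involutive.bijective (fun τ => flipB_flipB τ i)
  have colBound : ∀ i : Fin n,
      (Fintype.card (Fin n → Bool) : ℝ) / 20 ≤ ∑ τ : Fin n → Bool, a τ i := by
    intro i
    have hswap : ∑ τ : Fin n → Bool, a (flipB τ i) i = ∑ τ : Fin n → Bool, a τ i :=
      Fintype.sum_bijective (fun τ => flipB τ i) (hflip_bij i) _ _ (fun τ => rfl)
    have hsum : ∑ τ : Fin n → Bool, (1 / 10 : ℝ)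
        ≤ ∑ τ : Fin n → Bool, (a τ i + a (flipB τ i) i) :=
      Finset.sum_le_sum fun τ _ => pairBound τ i
    rw [Finset.sum_add_distrib, hswap, Finset.sum_const] at hsum
    simp only [Finset.card_univ, nsmul_eq_mul] at hsum
    linarith
  -- averaging over τ
  have havg : ∑ τ : Fin n → Bool, ((n : ℝ) / 20)
      ≤ ∑ τ : Fin n → Bool, ∑ i : Fin n, a τ i := by
    rw [Finset.sum_comm, Finset.sum_const]
    simp only [Finset.card_univ, nsmul_eq_mul]
    have : ∑ i : Fin n, ((Fintype.card (Fin n → Bool) : ℝ) / 20)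
        ≤ ∑ i : Fin n, ∑ τ : Fin n → Bool, a τ i :=
      Finset.sum_le_sum fun i _ => colBound i
    rw [Finset.sum_const] at this
    simp only [Finset.card_univ, nsmul_eq_mul, Fintype.card_fin] at this
    calc (Fintype.card (Fin n → Bool) : ℝ) * ((n : ℝ) / 20)
        = (n : ℝ) * ((Fintype.card (Fin n → Bool) : ℝ) / 20) := by ring
      _ ≤ _ := this
  obtain ⟨τ, _, hτ⟩ := Finset.exists_le_of_sum_le (Finset.univ_nonempty) havg
  refine ⟨τ, ?_⟩
  -- rewrite the expected cut weight as the sum of wrong-probabilities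
  have hexp : ∑ S : Finset (Fin (n + 2)),
      ((M (gTau n τ)) S).toReal * cutWeight (gTau n τ) S Sᶜ
      = ∑ i : Fin n, a τ i := by
    have h1 : ∀ S : Finset (Fin (n + 2)),
        ((M (gTau n τ)) S).toReal * cutWeight (gTau n τ) S Sᶜ
        = ∑ i : Fin n,
            (if vtx n i ∈ S ↔ τ i = false then ((M (gTau n τ)) S).toReal else 0) := by
      intro S
      by_cases hS : S ∈ (M (gTau n τ)).support
      · obtain ⟨hs, ht⟩ := hout _ (isWeight_gTau τ) S hS
        rw [cutWeight_gTau τ S hs ht, Finset.mul_sum]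
        exact Finset.sum_congr rfl fun i _ => by split <;> simp
      · have h0 : (M (gTau n τ)) S = 0 := by
          simpa [PMF.mem_support_iff] using hS
        simp [h0]
    rw [Finset.sum_congr rfl fun S _ => h1 S, Finset.sum_comm]
    refine Finset.sum_congr rfl fun i _ => ?_
    rw [show a τ i = Pr (M (gTau n τ)) (wrongEvent n τ i) from rfl, Pr_eq_sum]
    refine Finset.sum_congr rfl fun S _ => ?_
    exact if_congr Iff.rfl rfl rfl
  rw [hexp]
  exact hτ
end

section
/- Let ε > 0, let x and y be independent random variables each distributed as Lap(1/ε), let f and F denote the density and cumulative distribution function of Lap(1/ε), and for real numbers α, β, γ define P(α, β, γ) = P[x < α ∧ y < β ∧ x + y < γ]. If γ < α + β, then for every τ ≥ 0, P(α, β, γ) ≥ F(α)·F(γ − α − 2τ) + e^{−2τε} · ∫_{γ−α−2τ}^{β} F(γ − y)·f(y) dy. -/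
open MeasureTheory ProbabilityTheory Real Set Filter intervalIntegral

/-- The Laplace distribution `Lap(b)` on `ℝ`, with density `(1/(2b))·e^{−|x|/b}`. -/
noncomputable def lapMeasure (b : ℝ) : Measure ℝ :=
  volume.withDensity fun x => ENNReal.ofReal ((1 / (2 * b)) * Real.exp (-|x| / b))

/-- The density of the Laplace distribution `Lap(b)`. -/
noncomputable def lapPDF (b : ℝ) (x : ℝ) : ℝ := (1 / (2 * b)) * Real.exp (-|x| / b)

/-- The cumulative distribution function of the Laplace distribution `Lap(b)`. -/
noncomputable def lapCDF (b : ℝ) (x : ℝ) : ℝ :=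
  if x ≤ 0 then (1 / 2) * Real.exp (x / b) else 1 - (1 / 2) * Real.exp (-x / b)

variable {b : ℝ}

lemma lapPDF_nonneg (hb : 0 < b) (x : ℝ) : 0 ≤ lapPDF b x := by
  unfold lapPDF; positivity

lemma continuous_lapPDF (b : ℝ) : Continuous (lapPDF b) := by
  unfold lapPDF
  exact continuous_const.mul (Real.continuous_exp.comp ((continuous_abs.neg).div_const b))

lemma continuous_lapCDF (b : ℝ) : Continuous (lapCDF b) := by
  unfold lapCDF
  apply Continuous.if_le
  · exact continuous_const.mul (Real.continuous_exp.comp (continuous_id.div_const b))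
  · exact continuous_const.sub
      (continuous_const.mul (Real.continuous_exp.comp (continuous_id.neg.div_const b)))
  · exact continuous_id
  · exact continuous_const
  · intro x hx; simp [hx]; norm_num

lemma lapCDF_nonneg (hb : 0 < b) (x : ℝ) : 0 ≤ lapCDF b x := by
  unfold lapCDF
  split_ifs with h
  · positivity
  · push_neg at h
    have : Real.exp (-x / b) ≤ 1 := Real.exp_le_one_iff.mpr
      (div_nonpos_of_nonpos_of_nonneg (by linarith) hb.le)
    nlinarith

lemma lapCDF_le_one (hb : 0 < b) (x : ℝ) : lapCDF b x ≤ 1 := by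
  unfold lapCDF
  split_ifs with h
  · have : Real.exp (x / b) ≤ 1 := Real.exp_le_one_iff.mpr (by
      apply div_nonpos_of_nonpos_of_nonneg h hb.le)
    nlinarith
  · nlinarith [Real.exp_pos (-x / b)]

lemma lapCDF_mono (hb : 0 < b) {s t : ℝ} (h : s ≤ t) : lapCDF b s ≤ lapCDF b t := by
  unfold lapCDF
  split_ifs with h1 h2 h2
  · have : Real.exp (s / b) ≤ Real.exp (t / b) :=
      Real.exp_le_exp.mpr (by gcongr)
    nlinarith
  · push_neg at h2
    have h3 : Real.exp (s / b) ≤ 1 := Real.exp_le_one_iff.mpr (div_nonpos_of_nonpos_of_nonneg h1 hb.le)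
    have h4 : Real.exp (-t / b) < 1 := by
      apply Real.exp_lt_one_iff.mpr
      have : -t < 0 := by linarith
      exact div_neg_of_neg_of_pos this hb
    nlinarith
  · exact absurd (h.trans h2) h1
  · have : Real.exp (-t / b) ≤ Real.exp (-s / b) :=
      Real.exp_le_exp.mpr (by gcongr)
    nlinarith

lemma lapCDF_shift (hb : 0 < b) {k : ℝ} (hk : 0 ≤ k) (s : ℝ) :
    lapCDF b (s + k) ≤ Real.exp (k / b) * lapCDF b s := by
  have hek : 1 ≤ Real.exp (k / b) := Real.one_le_exp (by positivity)
  unfold lapCDF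
  split_ifs with h1 h2 h2
  · have e : Real.exp (k / b) * Real.exp (s / b) = Real.exp ((s + k) / b) := by
      rw [← Real.exp_add]; congr 1; ring
    nlinarith
  · push_neg at h2; linarith
  · push_neg at h1
    have e : Real.exp (k / b) * Real.exp (s / b) = Real.exp ((s + k) / b) := by
      rw [← Real.exp_add]; congr 1; ring
    have e2 : Real.exp ((s + k) / b) * Real.exp (-(s + k) / b) = 1 := by
      rw [← Real.exp_add]; rw [show (s + k) / b + -(s + k) / b = 0 by ring, Real.exp_zero]
    nlinarith [sq_nonneg (Real.exp ((s + k) / b) - 1), Real.exp_pos ((s + k) / b),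
      Real.exp_pos (-(s + k) / b)]
  · push_neg at h1 h2
    set K := Real.exp (k / b)
    set A := Real.exp (-s / b)
    set B := Real.exp (-(s + k) / b)
    have e1 : K * B = A := by
      rw [← Real.exp_add]; congr 1; ring
    have hA1 : A ≤ 1 := Real.exp_le_one_iff.mpr
      (div_nonpos_of_nonpos_of_nonneg (by linarith) hb.le)
    have hB : 0 < B := Real.exp_pos _
    have hBA : B ≤ A := by nlinarith
    nlinarith [mul_nonneg (sub_nonneg.mpr hek) (by linarith : (0:ℝ) ≤ 2 - A - B)]

lemma interval_exp_div (hb : 0 < b) (y t : ℝ) :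
    ∫ x in y..t, Real.exp (x / b) = b * (Real.exp (t / b) - Real.exp (y / b)) := by
  rw [intervalIntegral.integral_comp_div (fun x => Real.exp x) hb.ne', integral_exp]
  simp [smul_eq_mul, mul_sub]

lemma integrableOn_exp_div_Iic (hb : 0 < b) (t : ℝ) :
    IntegrableOn (fun x => Real.exp (x / b)) (Iic t) := by
  refine integrableOn_Iic_of_intervalIntegral_norm_bounded (b * Real.exp (t / b)) t
    (fun y => ((Real.continuous_exp.comp (continuous_id.div_const b)).integrableOn_Ioc))
    tendsto_id (eventually_of_mem (Iic_mem_atBot t) fun y hy => ?_)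
  have hyt : Real.exp (y / b) ≤ Real.exp (t / b) := Real.exp_le_exp.mpr (by gcongr; exact hy)
  simp only [id_eq]
  have : ∀ x : ℝ, ‖Real.exp (x / b)‖ = Real.exp (x / b) := fun x =>
    Real.norm_eq_abs _ ▸ abs_of_nonneg (Real.exp_pos _).le
  simp only [this]
  rw [interval_exp_div hb]
  nlinarith [Real.exp_pos (y / b)]

lemma integral_exp_div_Iic (hb : 0 < b) (t : ℝ) :
    ∫ x in Iic t, Real.exp (x / b) = b * Real.exp (t / b) := by
  refine tendsto_nhds_unique
    (intervalIntegral_tendsto_integral_Iic _ (integrableOn_exp_div_Iic hb t) tendsto_id) ?_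
  have : Tendsto (fun y : ℝ => b * (Real.exp (t / b) - Real.exp (y / b))) atBot
      (nhds (b * (Real.exp (t / b) - 0))) := by
    refine Tendsto.const_mul _ (Tendsto.const_sub _ ?_)
    exact Real.tendsto_exp_atBot.comp (tendsto_id.atBot_div_const hb)
  simpa [interval_exp_div hb] using this

lemma interval_exp_neg_div (hb : 0 < b) (y t : ℝ) :
    ∫ x in y..t, Real.exp (-x / b) = b * (Real.exp (-y / b) - Real.exp (-t / b)) := by
  have h : ∀ x : ℝ, Real.exp (-x / b) = (fun u => Real.exp (-u)) (x / b) := fun x => by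
    simp [neg_div]
  simp_rw [h]
  rw [intervalIntegral.integral_comp_div (fun u => Real.exp (-u)) hb.ne',
    intervalIntegral.integral_comp_neg (fun u => Real.exp u), integral_exp]
  simp [smul_eq_mul, neg_div, mul_sub]

lemma integrable_lapPDF (hb : 0 < b) : Integrable (lapPDF b) := by
  have h1 : IntegrableOn (lapPDF b) (Iic 0) :=
    IntegrableOn.congr_fun ((integrableOn_exp_div_Iic hb 0).const_mul (1 / (2 * b)))
      (fun x hx => by simp only [lapPDF, abs_of_nonpos (mem_Iic.mp hx), neg_neg])
      measurableSet_Iic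
  have h2 : IntegrableOn (lapPDF b) (Ioi 0) := by
    refine IntegrableOn.congr_fun ((exp_neg_integrableOn_Ioi 0
      (show (0:ℝ) < 1/b by positivity)).const_mul (1 / (2 * b))) (fun x hx => ?_) measurableSet_Ioi
    simp only [lapPDF, abs_of_pos (mem_Ioi.mp hx)]
    rw [neg_div, div_eq_inv_mul, one_div, neg_mul]
    ring_nf
  have : IntegrableOn (lapPDF b) (Iic 0 ∪ Ioi 0) := h1.union h2
  rwa [Iic_union_Ioi, integrableOn_univ] at this

lemma lapMeasure_apply (hb : 0 < b) {s : Set ℝ} (hs : MeasurableSet s) :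
    lapMeasure b s = ENNReal.ofReal (∫ x in s, lapPDF b x) := by
  have : lapMeasure b = volume.withDensity fun x => ENNReal.ofReal (lapPDF b x) := rfl
  rw [this, withDensity_apply _ hs,
    ← ofReal_integral_eq_lintegral_ofReal ((integrable_lapPDF hb).integrableOn)
      (ae_of_all _ fun x => lapPDF_nonneg hb x)]

lemma integral_lapPDF_Iio (hb : 0 < b) (t : ℝ) :
    ∫ x in Iio t, lapPDF b x = lapCDF b t := by
  rcases le_or_gt t 0 with ht | ht
  · rw [← integral_Iic_eq_integral_Iio]
    have he : ∀ x ∈ Iic t, lapPDF b x = (1 / (2 * b)) * Real.exp (x / b) := by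
      intro x hx
      simp only [lapPDF, abs_of_nonpos (le_trans (mem_Iic.mp hx) ht), neg_neg]
    rw [setIntegral_congr_fun measurableSet_Iic he, MeasureTheory.integral_const_mul, integral_exp_div_Iic hb,
      lapCDF, if_pos ht]
    field_simp
  · have hsplit : Iio t = Iic 0 ∪ Ioo 0 t := by
      ext u; simp only [mem_Iio, mem_union, mem_Iic, mem_Ioo]
      constructor
      · intro h; rcases le_or_gt u 0 with h' | h'
        · exact Or.inl h'
        · exact Or.inr ⟨h', h⟩
      · rintro (h | ⟨_, h⟩) <;> [linarith; exact h]
    have hdisj : Disjoint (Iic (0:ℝ)) (Ioo 0 t) := by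
      apply disjoint_left.mpr
      intro u hu hu'
      exact absurd (mem_Iic.mp hu) (not_le.mpr (mem_Ioo.mp hu').1)
    rw [hsplit, setIntegral_union hdisj measurableSet_Ioo
      (integrable_lapPDF hb).integrableOn (integrable_lapPDF hb).integrableOn]
    have p1 : ∫ x in Iic 0, lapPDF b x = 1 / 2 := by
      have he : ∀ x ∈ Iic (0:ℝ), lapPDF b x = (1 / (2 * b)) * Real.exp (x / b) := by
        intro x hx
        simp only [lapPDF, abs_of_nonpos (mem_Iic.mp hx), neg_neg]
      rw [setIntegral_congr_fun measurableSet_Iic he, MeasureTheory.integral_const_mul, integral_exp_div_Iic hb]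
      field_simp
      simp
    have p2 : ∫ x in Ioo 0 t, lapPDF b x = 1 / 2 - (1 / 2) * Real.exp (-t / b) := by
      have he : ∀ x ∈ Ioo (0:ℝ) t, lapPDF b x = (1 / (2 * b)) * Real.exp (-x / b) := by
        intro x hx
        simp only [lapPDF, abs_of_pos (mem_Ioo.mp hx).1]
      rw [setIntegral_congr_fun measurableSet_Ioo he, ← integral_Ioc_eq_integral_Ioo,
        ← intervalIntegral.integral_of_le ht.le, intervalIntegral.integral_const_mul,
        interval_exp_neg_div hb]
      rw [neg_zero, zero_div, Real.exp_zero]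
      field_simp
    rw [p1, p2, lapCDF, if_neg (not_le.mpr ht)]
    ring

lemma lapMeasure_Iio (hb : 0 < b) (t : ℝ) :
    lapMeasure b (Iio t) = ENNReal.ofReal (lapCDF b t) := by
  rw [lapMeasure_apply hb measurableSet_Iio, integral_lapPDF_Iio hb]

lemma lapMeasure_Iic (hb : 0 < b) (t : ℝ) :
    lapMeasure b (Iic t) = ENNReal.ofReal (lapCDF b t) := by
  rw [lapMeasure_apply hb measurableSet_Iic, integral_Iic_eq_integral_Iio,
    integral_lapPDF_Iio hb]

instance (b : ℝ) : SFinite (lapMeasure b) := by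
  unfold lapMeasure; infer_instance

/-- For independent `x, y ∼ Lap(1/ε)` and
`P(α,β,γ) = P[x < α ∧ y < β ∧ x + y < γ]`, if `γ < α + β` then for every `τ ≥ 0`,
`P(α, β, γ) ≥ F(α)·F(γ − α − 2τ) + e^{−2τε}·∫_{γ−α−2τ}^{β} F(γ − y)·f(y) dy`. -/
theorem laplace_prob_lower_bound
    (Ω : Type) [MeasurableSpace Ω] (μ : Measure Ω) [IsProbabilityMeasure μ]
    (ε : ℝ) (hε : 0 < ε) (x y : Ω → ℝ) (hx : Measurable x) (hy : Measurable y)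
    (hxd : μ.map x = lapMeasure (1 / ε)) (hyd : μ.map y = lapMeasure (1 / ε))
    (hind : IndepFun x y μ) (α β γ : ℝ) (hγ : γ < α + β) (τ : ℝ) (hτ : 0 ≤ τ) :
    lapCDF (1 / ε) α * lapCDF (1 / ε) (γ - α - 2 * τ) +
        Real.exp (-(2 * τ * ε)) *
          ∫ z in (γ - α - 2 * τ)..β, lapCDF (1 / ε) (γ - z) * lapPDF (1 / ε) z ≤
      (μ {ω | x ω < α ∧ y ω < β ∧ x ω + y ω < γ}).toReal := by
  set b : ℝ := 1 / ε with hbdef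
  have hb : 0 < b := by positivity
  set c : ℝ := γ - α - 2 * τ with hcdef
  have hcβ : c < β := by rw [hcdef]; linarith
  set ν : Measure ℝ := lapMeasure b with hν
  set e : ℝ := Real.exp (-(2 * τ * ε)) with hedef
  have hτb : (2 * τ) / b = 2 * τ * ε := by rw [hbdef]; field_simp
  have he1 : e ≤ 1 := Real.exp_le_one_iff.mpr (by nlinarith)
  have he0 : 0 < e := Real.exp_pos _
  have hee : e * Real.exp ((2 * τ) / b) = 1 := by
    rw [hedef, hτb, ← Real.exp_add]; simp
  -- joint law
  have hmapyx : μ.map (fun ω => (y ω, x ω)) = ν.prod ν := by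
    rw [(ProbabilityTheory.indepFun_iff_map_prod_eq_prod_map_map hy.aemeasurable
      hx.aemeasurable).mp hind.symm, hyd, hxd]
  set T : Set (ℝ × ℝ) := {p | p.2 < α ∧ p.1 < β ∧ p.2 + p.1 < γ} with hT
  have hTm : MeasurableSet T :=
    MeasurableSet.inter (measurableSet_lt measurable_snd measurable_const)
      (MeasurableSet.inter (measurableSet_lt measurable_fst measurable_const)
        (measurableSet_lt (measurable_snd.add measurable_fst) measurable_const))
  have hμE : μ {ω | x ω < α ∧ y ω < β ∧ x ω + y ω < γ} = (ν.prod ν) T := by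
    have hE : {ω | x ω < α ∧ y ω < β ∧ x ω + y ω < γ} = (fun ω => (y ω, x ω)) ⁻¹' T := rfl
    rw [hE, ← Measure.map_apply (hy.prodMk hx) hTm, hmapyx]
  set A : Set (ℝ × ℝ) := Iic c ×ˢ Iio α with hA
  set B : Set (ℝ × ℝ) := {p | p.1 ∈ Ioo c β ∧ p.2 < min α (γ - p.1)} with hB
  have hBm : MeasurableSet B :=
    MeasurableSet.inter (measurable_fst measurableSet_Ioo)
      (measurableSet_lt measurable_snd
        (measurable_const.min (measurable_const.sub measurable_fst)))
  have hsub : A ∪ B ⊆ T := by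
    rintro ⟨v, u⟩ (⟨hv, hu⟩ | ⟨⟨hv1, hv2⟩, hu⟩)
    · have hv' : v ≤ c := hv
      have hu' : u < α := hu
      refine ⟨hu', by rw [hcdef] at hv'; constructor <;> linarith⟩
    · have h1 : u < α := lt_of_lt_of_le hu (min_le_left _ _)
      have h2 : u < γ - v := lt_of_lt_of_le hu (min_le_right _ _)
      exact ⟨h1, hv2, by linarith⟩
  have hdisj : Disjoint A B := by
    rw [Set.disjoint_left]
    rintro ⟨v, u⟩ ⟨hv, _⟩ ⟨⟨hv1, _⟩, _⟩
    exact absurd (mem_Iic.mp hv) (not_le.mpr hv1)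
  have hchain : (ν.prod ν) A + (ν.prod ν) B ≤ (ν.prod ν) T := by
    rw [← measure_union hdisj hBm]
    exact measure_mono hsub
  -- measure of A
  have hmA : (ν.prod ν) A = ENNReal.ofReal (lapCDF b α * lapCDF b c) := by
    rw [hA, Measure.prod_prod, hν, lapMeasure_Iic hb, lapMeasure_Iio hb,
      ← ENNReal.ofReal_mul (lapCDF_nonneg hb c), mul_comm]
  -- measure of B
  have hmB : (ν.prod ν) B = ∫⁻ v in Ioo c β, ENNReal.ofReal (lapCDF b (min α (γ - v))) ∂ν := by
    rw [Measure.prod_apply hBm, ← lintegral_indicator measurableSet_Ioo]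
    refine lintegral_congr fun v => ?_
    by_cases hv : v ∈ Ioo c β
    · have : Prod.mk v ⁻¹' B = Iio (min α (γ - v)) := by
        ext u
        simp only [hB, mem_preimage, mem_setOf_eq, mem_Iio]
        exact ⟨fun h => h.2, fun h => ⟨hv, h⟩⟩
      rw [this, hν, lapMeasure_Iio hb, Set.indicator_of_mem hv]
    · have : Prod.mk v ⁻¹' B = ∅ := by
        ext u
        simp only [hB, mem_preimage, mem_setOf_eq, mem_empty_iff_false, iff_false, not_and]
        tauto
      rw [this, Set.indicator_of_notMem hv, measure_empty]
  -- pointwise lower bound on the slice CDF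
  have hpt : ∀ v ∈ Ioo c β,
      ENNReal.ofReal (e * lapCDF b (γ - v)) ≤ ENNReal.ofReal (lapCDF b (min α (γ - v))) := by
    intro v hv
    apply ENNReal.ofReal_le_ofReal
    by_cases hvα : γ - v ≤ α
    · rw [min_eq_right hvα]
      nlinarith [lapCDF_nonneg hb (γ - v)]
    · push_neg at hvα
      rw [min_eq_left hvα.le]
      have hmono : lapCDF b (γ - v) ≤ lapCDF b (α + 2 * τ) := by
        apply lapCDF_mono hb
        have := hv.1
        rw [hcdef] at this; linarith
      have hshift : lapCDF b (α + 2 * τ) ≤ Real.exp ((2 * τ) / b) * lapCDF b α :=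
        lapCDF_shift hb (by linarith) α
      nlinarith [lapCDF_nonneg hb α, Real.exp_pos ((2 * τ) / b)]
  have hmono2 : ∫⁻ v in Ioo c β, ENNReal.ofReal (e * lapCDF b (γ - v)) ∂ν ≤ (ν.prod ν) B := by
    rw [hmB]
    exact setLIntegral_mono' measurableSet_Ioo hpt
  -- compute the lower-bound lintegral
  have hcont : Continuous fun v : ℝ => lapPDF b v * (e * lapCDF b (γ - v)) :=
    (continuous_lapPDF b).mul (continuous_const.mul
      ((continuous_lapCDF b).comp (continuous_const.sub continuous_id)))
  have hint : IntegrableOn (fun v : ℝ => lapPDF b v * (e * lapCDF b (γ - v))) (Ioo c β) := by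
    have := (hcont.intervalIntegrable c β : IntervalIntegrable _ volume c β)
    rw [intervalIntegrable_iff_integrableOn_Ioc_of_le hcβ.le] at this
    exact this.mono_set Ioo_subset_Ioc_self
  have hcalc : ∫⁻ v in Ioo c β, ENNReal.ofReal (e * lapCDF b (γ - v)) ∂ν =
      ENNReal.ofReal (e * ∫ z in c..β, lapCDF b (γ - z) * lapPDF b z) := by
    have hfmeas : Measurable fun v : ℝ => ENNReal.ofReal (lapPDF b v) :=
      ENNReal.measurable_ofReal.comp (continuous_lapPDF b).measurable
    have hgmeas : Measurable fun v : ℝ => ENNReal.ofReal (e * lapCDF b (γ - v)) :=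
      ENNReal.measurable_ofReal.comp (continuous_const.mul
        ((continuous_lapCDF b).comp (continuous_const.sub continuous_id))).measurable
    have h0 : ν = volume.withDensity fun v => ENNReal.ofReal (lapPDF b v) := rfl
    rw [h0, setLIntegral_withDensity_eq_setLIntegral_mul volume hfmeas hgmeas measurableSet_Ioo]
    have h1 : ∀ v : ℝ, ((fun v => ENNReal.ofReal (lapPDF b v)) *
        fun v => ENNReal.ofReal (e * lapCDF b (γ - v))) v =
        ENNReal.ofReal (lapPDF b v * (e * lapCDF b (γ - v))) := by
      intro v
      simp only [Pi.mul_apply]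
      rw [← ENNReal.ofReal_mul (lapPDF_nonneg hb v)]
    simp_rw [h1]
    rw [← ofReal_integral_eq_lintegral_ofReal hint (ae_of_all _ fun v => by
      have := lapPDF_nonneg hb v
      have := lapCDF_nonneg hb (γ - v)
      positivity)]
    congr 1
    rw [intervalIntegral.integral_of_le hcβ.le, integral_Ioc_eq_integral_Ioo]
    have h2 : ∀ v : ℝ, lapPDF b v * (e * lapCDF b (γ - v)) =
        e * (lapCDF b (γ - v) * lapPDF b v) := fun v => by ring
    simp_rw [h2]
    rw [MeasureTheory.integral_const_mul]
  -- final assembly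
  have hI0 : 0 ≤ ∫ z in c..β, lapCDF b (γ - z) * lapPDF b z :=
    intervalIntegral.integral_nonneg hcβ.le fun z _ =>
      mul_nonneg (lapCDF_nonneg hb _) (lapPDF_nonneg hb z)
  rw [hμE]
  rw [← ENNReal.ofReal_le_iff_le_toReal (by rw [← hμE]; exact measure_ne_top μ _)]
  calc ENNReal.ofReal (lapCDF b α * lapCDF b c +
        e * ∫ z in c..β, lapCDF b (γ - z) * lapPDF b z)
      = ENNReal.ofReal (lapCDF b α * lapCDF b c) +
        ENNReal.ofReal (e * ∫ z in c..β, lapCDF b (γ - z) * lapPDF b z) := by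
        rw [ENNReal.ofReal_add (mul_nonneg (lapCDF_nonneg hb α) (lapCDF_nonneg hb c))
          (mul_nonneg he0.le hI0)]
    _ ≤ (ν.prod ν) A + (ν.prod ν) B := by
        rw [hmA]
        exact add_le_add le_rfl (hcalc ▸ hmono2)
    _ ≤ (ν.prod ν) T := hchain
end
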